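/- Let M be an m×n complex matrix such that M A M = M for some n×m matrix A (i.e., M is an outer inverse of A). Let 𝒳̂ := ker(M) and 𝒴̂^⊥ := im(M), and let P₁ and P₂ be the orthogonal projections onto 𝒳̂^⊥ and 𝒴̂^⊥ respectively. Then the Moore–Penrose inverse of M is M⁺ = P₁ A P₂. -/

import Mathlib

open Matrix

def IsMPInv {m n : Type*} [Fintype m] [Fintype n] (A : Matrix m n ℂ) (Z : Matrix n m ℂ) : Prop :=
  A * Z * A = A ∧ Z * A * Z = Z ∧ (A * Z)ᴴ = A * Z ∧ (Z * A)ᴴ = Z * A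

lemma toEucLin_mul {k l p : ℕ} (A : Matrix (Fin k) (Fin l) ℂ) (B : Matrix (Fin l) (Fin p) ℂ) :
    Matrix.toEuclideanLin (A * B) =
      (Matrix.toEuclideanLin A).comp (Matrix.toEuclideanLin B) := by
  apply LinearMap.ext
  intro v
  simp [Matrix.toEuclideanLin_apply, Matrix.mulVec_mulVec]

/-- If `M A M = M`, and `P₁`, `P₂` are the orthogonal projections onto
`(ker M)ᗮ` and `im M` respectively, then `M⁺ = P₁ A P₂`. -/
theorem stmt8 {m n : ℕ}
    (M : Matrix (Fin m) (Fin n) ℂ) (A : Matrix (Fin n) (Fin m) ℂ)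
    (hMA : M * A * M = M)
    (P₁ : Matrix (Fin n) (Fin n) ℂ)
    (hP₁ : P₁ * P₁ = P₁ ∧ P₁ᴴ = P₁ ∧
      LinearMap.range (Matrix.toEuclideanLin P₁) =
        (LinearMap.ker (Matrix.toEuclideanLin M))ᗮ)
    (P₂ : Matrix (Fin m) (Fin m) ℂ)
    (hP₂ : P₂ * P₂ = P₂ ∧ P₂ᴴ = P₂ ∧
      LinearMap.range (Matrix.toEuclideanLin P₂) =
        LinearMap.range (Matrix.toEuclideanLin M)) :
    IsMPInv M (P₁ * A * P₂) := by
  obtain ⟨hP₁idem, hP₁herm, hP₁range⟩ := hP₁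
  obtain ⟨hP₂idem, hP₂herm, hP₂range⟩ := hP₂
  set LM := Matrix.toEuclideanLin M with hLM
  set LA := Matrix.toEuclideanLin A with hLA
  set L1 := Matrix.toEuclideanLin P₁ with hL1
  set L2 := Matrix.toEuclideanLin P₂ with hL2
  have hL1idem : ∀ x, L1 (L1 x) = L1 x := by
    intro x
    have := congrArg Matrix.toEuclideanLin hP₁idem
    rw [toEucLin_mul] at this
    simpa using LinearMap.congr_fun this x
  have hL2idem : ∀ x, L2 (L2 x) = L2 x := by
    intro x
    have := congrArg Matrix.toEuclideanLin hP₂idem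
    rw [toEucLin_mul] at this
    simpa using LinearMap.congr_fun this x
  have hL1adj : LinearMap.adjoint L1 = L1 := by
    rw [hL1, ← Matrix.toEuclideanLin_conjTranspose_eq_adjoint, hP₁herm]
  -- x - L1 x ∈ ker LM for all x
  have hker : ∀ x, x - L1 x ∈ LinearMap.ker LM := by
    intro x
    have hmem : x - L1 x ∈ (LinearMap.range L1)ᗮ := by
      rw [Submodule.mem_orthogonal]
      rintro u ⟨z, rfl⟩
      have h := LinearMap.adjoint_inner_left L1 (x - L1 x) z
      rw [hL1adj] at h
      rw [h, map_sub, hL1idem, sub_self, inner_zero_right]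
    rwa [hP₁range, Submodule.orthogonal_orthogonal] at hmem
  -- ker LM ⊆ ker L1
  have hker' : ∀ x, LM x = 0 → L1 x = 0 := by
    intro x hx
    have h1 := LinearMap.adjoint_inner_left L1 x (L1 x)
    rw [hL1adj, hL1idem] at h1
    have h2 : (inner ℂ x (L1 x) : ℂ) = 0 := by
      have hmem : L1 x ∈ (LinearMap.ker LM)ᗮ := by
        rw [← hP₁range]; exact ⟨x, rfl⟩
      exact (Submodule.mem_orthogonal _ _).mp hmem x (by simpa using hx)
    have h3 : (inner ℂ (L1 x) x : ℂ) = 0 := inner_eq_zero_symm.mp h2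
    rw [h3] at h1
    exact inner_self_eq_zero.mp h1.symm
  -- matrix identities
  have hMP₁ : M * P₁ = M := by
    apply Matrix.toEuclideanLin.injective
    rw [toEucLin_mul, ← hLM, ← hL1]
    apply LinearMap.ext; intro x
    have := hker x
    rw [LinearMap.mem_ker, map_sub, sub_eq_zero] at this
    exact this.symm
  have hMAM : ∀ x, LM (LA (LM x)) = LM x := by
    intro x
    have := congrArg Matrix.toEuclideanLin hMA
    rw [toEucLin_mul, toEucLin_mul, ← hLM, ← hLA] at this
    simpa using LinearMap.congr_fun this x
  have hP₁AM : P₁ * A * M = P₁ := by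
    apply Matrix.toEuclideanLin.injective
    rw [toEucLin_mul, toEucLin_mul, ← hLM, ← hLA, ← hL1]
    apply LinearMap.ext; intro x
    have h0 : LM (LA (LM x) - x) = 0 := by
      rw [map_sub, hMAM, sub_self]
    have := hker' _ h0
    rw [map_sub, sub_eq_zero] at this
    exact this
  have hP₂M : P₂ * M = M := by
    apply Matrix.toEuclideanLin.injective
    rw [toEucLin_mul, ← hLM, ← hL2]
    apply LinearMap.ext; intro x
    have hmem : LM x ∈ LinearMap.range L2 := by
      rw [hP₂range]; exact ⟨x, rfl⟩
    obtain ⟨z, hz⟩ := hmem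
    simp only [LinearMap.comp_apply]
    rw [← hz, hL2idem]
  have hMAP₂ : M * A * P₂ = P₂ := by
    apply Matrix.toEuclideanLin.injective
    rw [toEucLin_mul, toEucLin_mul, ← hLM, ← hLA, ← hL2]
    apply LinearMap.ext; intro x
    have hmem : L2 x ∈ LinearMap.range LM := by
      rw [← hP₂range]; exact ⟨x, rfl⟩
    obtain ⟨v, hv⟩ := hmem
    simp only [LinearMap.comp_apply]
    rw [← hv, hMAM]
  -- assemble
  have hMZ : M * (P₁ * A * P₂) = P₂ := by
    calc M * (P₁ * A * P₂) = M * P₁ * A * P₂ := by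
          simp only [Matrix.mul_assoc]
    _ = M * A * P₂ := by rw [hMP₁]
    _ = P₂ := hMAP₂
  have hZM : (P₁ * A * P₂) * M = P₁ := by
    calc (P₁ * A * P₂) * M = P₁ * A * (P₂ * M) := by
          simp only [Matrix.mul_assoc]
    _ = P₁ * A * M := by rw [hP₂M]
    _ = P₁ := hP₁AM
  refine ⟨?_, ?_, ?_, ?_⟩
  · rw [hMZ, hP₂M]
  · rw [hZM]
    calc P₁ * (P₁ * A * P₂) = P₁ * P₁ * A * P₂ := by simp only [Matrix.mul_assoc]
    _ = P₁ * A * P₂ := by rw [hP₁idem]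
  · rw [hMZ, hP₂herm]
  · rw [hZM, hP₁herm]
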